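/- Let Q be a quiver and for each dimension vector d define the polynomial n_d(x) by the recursion n_0 = 1 and n_d(x) = -∑_{e ⪇ d} (-1)^{dim d - dim e} x^{∑_i (C(d_i,2) - C(e_i,2)) - ⟨e, d-e⟩} [d choose e]_x · n_e(x) for d ≠ 0, where ⟨·,·⟩ is the Euler form of Q, dim d = ∑_i d_i, and [d choose e]_x = ∏_i [d_i choose e_i]_x. Then each n_d(x) is a polynomial with integer coefficients (i.e., lies in Z[x], with no negative powers of x appearing). -/

import Mathlib

/-- The q-Pochhammer symbol. -/
noncomputable def qPoch {K : Type*} [Field K] (q : K) (n : ℕ) : K :=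
  ∏ i ∈ Finset.range n, (1 - q ^ (i + 1))

/-- Gaussian binomial coefficient. -/
noncomputable def gbinom {K : Type*} [Field K] (q : K) (n k : ℕ) : K :=
  qPoch q n / (qPoch q k * qPoch q (n - k))

/-- Euler form of the quiver with vertex set `V` and `r i j` arrows from `i` to `j`. -/
def eulerForm (V : Type*) [Fintype V] (r : V → V → ℕ) (d e : V → ℕ) : ℤ :=
  ∑ i, (d i : ℤ) * (e i : ℤ) - ∑ i, ∑ j, (r i j : ℤ) * (d i : ℤ) * (e j : ℤ)

lemma qPoch_zero {K : Type*} [Field K] (q : K) : qPoch q 0 = 1 := by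
  simp [qPoch]

lemma qPoch_succ {K : Type*} [Field K] (q : K) (m : ℕ) :
    qPoch q (m + 1) = qPoch q m * (1 - q ^ (m + 1)) := by
  simp [qPoch, Finset.prod_range_succ]

lemma one_sub_X_pow_ne_zero (m : ℕ) : (1 - (RatFunc.X : RatFunc ℚ) ^ (m + 1)) ≠ 0 := by
  have h : (1 - (RatFunc.X : RatFunc ℚ) ^ (m + 1)) =
      algebraMap (Polynomial ℚ) (RatFunc ℚ) (1 - Polynomial.X ^ (m + 1)) := by
    simp [map_sub, map_pow, RatFunc.algebraMap_X]
  rw [h]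
  apply RatFunc.algebraMap_ne_zero
  intro hzero
  have := congrArg (Polynomial.eval 0) hzero
  simp at this

lemma qPoch_X_ne_zero (m : ℕ) : qPoch (RatFunc.X : RatFunc ℚ) m ≠ 0 := by
  induction m with
  | zero => simp [qPoch_zero]
  | succ m ih => rw [qPoch_succ]; exact mul_ne_zero ih (one_sub_X_pow_ne_zero m)

lemma gbinom_zero_right (n : ℕ) : gbinom (RatFunc.X : RatFunc ℚ) n 0 = 1 := by
  unfold gbinom
  rw [qPoch_zero, Nat.sub_zero, one_mul, div_self (qPoch_X_ne_zero n)]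

lemma gbinom_self (n : ℕ) : gbinom (RatFunc.X : RatFunc ℚ) n n = 1 := by
  unfold gbinom
  rw [Nat.sub_self, qPoch_zero, mul_one, div_self (qPoch_X_ne_zero n)]

lemma gbinom_pascal (k a : ℕ) :
    gbinom (RatFunc.X : RatFunc ℚ) (k + a + 2) (k + 1) =
      gbinom RatFunc.X (k + a + 1) k +
        RatFunc.X ^ (k + 1) * gbinom RatFunc.X (k + a + 1) (k + 1) := by
  set q : RatFunc ℚ := RatFunc.X with hq
  unfold gbinom
  have h1 : k + a + 2 - (k + 1) = a + 1 := by omega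
  have h2 : k + a + 1 - k = a + 1 := by omega
  have h3 : k + a + 1 - (k + 1) = a := by omega
  rw [h1, h2, h3]
  have e1 : qPoch q (k + a + 2) = qPoch q (k + a + 1) * (1 - q ^ (k + a + 2)) :=
    qPoch_succ q (k + a + 1)
  have e2 : qPoch q (k + 1) = qPoch q k * (1 - q ^ (k + 1)) := qPoch_succ q k
  have e3 : qPoch q (a + 1) = qPoch q a * (1 - q ^ (a + 1)) := qPoch_succ q a
  rw [e1, e2, e3]
  have nk : qPoch q k ≠ 0 := qPoch_X_ne_zero k
  have na : qPoch q a ≠ 0 := qPoch_X_ne_zero a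
  have fk : 1 - q ^ (k + 1) ≠ 0 := one_sub_X_pow_ne_zero k
  have fa : 1 - q ^ (a + 1) ≠ 0 := one_sub_X_pow_ne_zero a
  field_simp
  ring

/-- The canonical ring map `ℤ[x] → ℚ(x)`. -/
noncomputable def intPolyToRatFunc : Polynomial ℤ →+* RatFunc ℚ :=
  Polynomial.eval₂RingHom (Int.castRingHom (RatFunc ℚ)) RatFunc.X

lemma X_mem_range : (RatFunc.X : RatFunc ℚ) ∈ intPolyToRatFunc.range :=
  ⟨Polynomial.X, by simp [intPolyToRatFunc]⟩

lemma gbinom_mem :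
    ∀ n k : ℕ, k ≤ n → gbinom (RatFunc.X : RatFunc ℚ) n k ∈ intPolyToRatFunc.range := by
  intro n
  induction n with
  | zero =>
    intro k hk
    interval_cases k
    rw [gbinom_zero_right]; exact one_mem _
  | succ n ih =>
    intro k hk
    match k with
    | 0 => rw [gbinom_zero_right]; exact one_mem _
    | k + 1 =>
      by_cases hkn : k = n
      · subst hkn; rw [gbinom_self]; exact one_mem _
      · obtain ⟨a, ha⟩ : ∃ a, n = k + a + 1 := ⟨n - k - 1, by omega⟩
        subst ha
        rw [show k + a + 1 + 1 = k + a + 2 from rfl, gbinom_pascal k a]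
        exact add_mem (ih k (by omega))
          (mul_mem (pow_mem X_mem_range (k + 1)) (ih (k + 1) (by omega)))

lemma choose_two_add (a b : ℕ) : (a + b).choose 2 = a.choose 2 + b.choose 2 + a * b := by
  induction b with
  | zero => simp
  | succ b ih =>
    rw [show a + (b + 1) = (a + b) + 1 from rfl, Nat.choose_succ_succ,
      Nat.choose_one_right, ih, Nat.choose_succ_succ (b), Nat.choose_one_right,
      Nat.mul_succ]
    simp only [show Nat.succ 1 = 2 from rfl]
    omega

lemma exponent_eq {V : Type*} [Fintype V] (r : V → V → ℕ) (d e : V → ℕ) (h : e ≤ d) :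
    (∑ i, ((d i).choose 2 : ℤ)) - (∑ i, ((e i).choose 2 : ℤ)) - eulerForm V r e (d - e) =
      ((∑ i, (d i - e i).choose 2 + ∑ i, ∑ j, r i j * (e i * (d j - e j)) : ℕ) : ℤ) := by
  have hd : ∀ i ∈ Finset.univ, ((d i).choose 2 : ℤ) =
      ((e i).choose 2 : ℤ) + ((d i - e i).choose 2 : ℤ)
        + (e i : ℤ) * ((d i - e i : ℕ) : ℤ) := by
    intro i _
    have h2 := choose_two_add (e i) (d i - e i)
    rw [Nat.add_sub_cancel' (h i)] at h2
    exact_mod_cast congrArg (Nat.cast : ℕ → ℤ) h2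
  rw [Finset.sum_congr rfl hd]
  simp only [eulerForm, Pi.sub_apply, Nat.cast_add, Nat.cast_mul, Nat.cast_sum,
    Finset.sum_add_distrib]
  ring_nf

/-- If `n` satisfies the nullcone recursion, then each `n d` is (the image in `ℚ(x)` of)
a polynomial with integer coefficients. -/
theorem nullcone_recursion_polynomiality
    (V : Type*) [Fintype V] [DecidableEq V] (r : V → V → ℕ)
    (n : (V → ℕ) → RatFunc ℚ)
    (h0 : n 0 = 1)
    (hrec : ∀ d : V → ℕ, d ≠ 0 → n d =
      -∑ e ∈ (Finset.Iic d).erase d,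
        (-1 : RatFunc ℚ) ^ (∑ i, d i - ∑ i, e i) *
          (RatFunc.X : RatFunc ℚ) ^
            ((∑ i, ((d i).choose 2 : ℤ) - ∑ i, ((e i).choose 2 : ℤ)) - eulerForm V r e (d - e)) *
          (∏ i, gbinom (RatFunc.X : RatFunc ℚ) (d i) (e i)) * n e) :
    ∀ d : V → ℕ, ∃ p : Polynomial ℤ,
      n d = Polynomial.eval₂ (Int.castRingHom (RatFunc ℚ)) RatFunc.X p := by
  suffices H : ∀ m (d : V → ℕ), ∑ i, d i ≤ m → n d ∈ intPolyToRatFunc.range by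
    intro d
    obtain ⟨p, hp⟩ := H (∑ i, d i) d le_rfl
    exact ⟨p, hp.symm⟩
  intro m
  induction m with
  | zero =>
    intro d hd
    have hdz : d = 0 := by
      funext i
      have hle : d i ≤ ∑ j, d j :=
        Finset.single_le_sum (f := d) (fun j _ => Nat.zero_le _) (Finset.mem_univ i)
      have : d i = 0 := by omega
      simpa using this
    rw [hdz, h0]; exact one_mem _
  | succ m ih =>
    intro d hd
    by_cases hdz : d = 0
    · rw [hdz, h0]; exact one_mem _
    rw [hrec d hdz]
    refine neg_mem (sum_mem ?_)
    intro e he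
    rw [Finset.mem_erase, Finset.mem_Iic] at he
    obtain ⟨hne, hle⟩ := he
    have hlt : ∑ i, e i < ∑ i, d i := by
      refine Finset.sum_lt_sum (fun i _ => hle i) ?_
      by_contra hc
      push_neg at hc
      exact hne (funext fun i => le_antisymm (hle i) (hc i (Finset.mem_univ i)))
    refine mul_mem (mul_mem (mul_mem ?_ ?_) ?_) ?_
    · exact pow_mem (neg_mem (one_mem _)) _
    · rw [show (∑ i, ((d i).choose 2 : ℤ) - ∑ i, ((e i).choose 2 : ℤ)) - eulerForm V r e (d - e)
          = ((∑ i, (d i - e i).choose 2 + ∑ i, ∑ j, r i j * (e i * (d j - e j)) : ℕ) : ℤ) from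
          exponent_eq r d e hle, zpow_natCast]
      exact pow_mem X_mem_range _
    · exact prod_mem fun i _ => gbinom_mem (d i) (e i) (hle i)
    · exact ih e (by omega)
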